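/- Let t ≥ 1, π a permutation of Fin t, and I_A, I_B finite index types. Let N be the reindexed permutation operator W_π of local index I_A × I_B, viewed as a matrix indexed by (Fin t → I_A) × (Fin t → I_B), and define its partial transpose on the B factor by N^{T_B}[(a,b),(a',b')] := N[(a,b'),(a',b)]. Then N^{T_B} = W_π^{A} ⊗ W_{π⁻¹}^{B}, i.e., the partial transpose on subsystem B of a permutation operator acting identically on both subsystems equals the Kronecker product of the permutation operator on A with the inverse-permutation operator on B. -/

import Mathlib

open Matrix Kronecker

noncomputable section

/-- Permutation operator `W_π` of local index `I`: `W_π[b,a] = 1` iff `b = a ∘ π`. -/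
def permOp (I : Type*) [DecidableEq I] {t : ℕ} (π : Equiv.Perm (Fin t)) :
    Matrix (Fin t → I) (Fin t → I) ℂ :=
  Matrix.of fun b a => if b = a ∘ ⇑π then 1 else 0

/-- Partial transpose on the second (B) factor. -/
def ptB {α β : Type*} (M : Matrix (α × β) (α × β) ℂ) : Matrix (α × β) (α × β) ℂ :=
  Matrix.of fun p q => M (p.1, q.2) (q.1, p.2)

theorem stmt_1 (t : ℕ) (ht : 1 ≤ t) (π : Equiv.Perm (Fin t))
    (IA IB : Type*) [Fintype IA] [Fintype IB] [DecidableEq IA] [DecidableEq IB] :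
    ptB (Matrix.reindex (Equiv.arrowProdEquivProdArrow (Fin t) (fun _ => IA) (fun _ => IB))
        (Equiv.arrowProdEquivProdArrow (Fin t) (fun _ => IA) (fun _ => IB)) (permOp (IA × IB) π)) =
      permOp IA π ⊗ₖ permOp IB π⁻¹ := by
  ext ⟨a, b⟩ ⟨a', b'⟩
  simp only [ptB, permOp, Matrix.reindex_apply, Matrix.submatrix_apply, Matrix.of_apply,
    Matrix.kroneckerMap_apply, Equiv.arrowProdEquivProdArrow, Equiv.coe_fn_symm_mk]
  simp only [ite_mul, one_mul, zero_mul, ← ite_and]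
  congr 1
  rw [eq_iff_iff]
  simp only [funext_iff, Function.comp_apply, Prod.mk.injEq]
  constructor
  · intro h
    exact ⟨fun i => (h i).1, fun i => by
      have := (h (π⁻¹ i)).2
      simpa using this.symm⟩
  · intro ⟨h1, h2⟩ i
    exact ⟨h1 i, by have := h2 (π i); simpa using this.symm⟩
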